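/- Set Δ̃₁ = d̃₁ + d̃ₒ − d̃₋ − d̃₊*. For every fixed λ > 0, η ∈ ℝ and k ∈ 𝕋 with k ≠ 0, one has lim_{ε→0+} γ·R(k)·Δ̃₁(λ,η,k)/δ̃_ε(λ,η,k) = 1/2. -/
import Mathlib


noncomputable section

open Real Matrix Complex

/-- Dispersion relation `ω(k) = 2√α·sin²(πk)`. -/
def ω (α k : ℝ) : ℝ := 2 * Real.sqrt α * Real.sin (π * k) ^ 2

/-- `R(k) = 2·sin²(πk)·(1 + 2cos²(πk))`. -/
def R (k : ℝ) : ℝ := 2 * Real.sin (π * k) ^ 2 * (1 + 2 * Real.cos (π * k) ^ 2)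

/-- `R′(k) = 2π·(sin(2πk) + sin(4πk))`. -/
def R' (k : ℝ) : ℝ := 2 * π * (Real.sin (2 * π * k) + Real.sin (4 * π * k))

/-- `R″(k) = 4π²·(4cos²(2πk) + cos(2πk) − 2)`. -/
def R'' (k : ℝ) : ℝ := 4 * π ^ 2 * (4 * Real.cos (2 * π * k) ^ 2 + Real.cos (2 * π * k) - 2)

/-- `R_ε = R(k) + ((εη)²/8)·R″(k)`. -/
def Rε (ε η k : ℝ) : ℝ := R k + (ε * η) ^ 2 / 8 * R'' k

/-- `ω̄ = (ω(k + εη/2) + ω(k − εη/2))/2`. -/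
def ωbar (α ε η k : ℝ) : ℝ := (ω α (k + ε * η / 2) + ω α (k - ε * η / 2)) / 2

/-- `Δω = ω(k + εη/2) − ω(k − εη/2)`. -/
def Δω (α ε η k : ℝ) : ℝ := ω α (k + ε * η / 2) - ω α (k - ε * η / 2)

/-- `D̃₁ = ε²λ + 2γR_ε + i·Δω`. -/
def D₁ (α γ ε lam η k : ℝ) : ℂ :=
  (ε ^ 2 * lam + 2 * γ * Rε ε η k : ℝ) + Complex.I * (Δω α ε η k : ℝ)

/-- `D̃₂ = ε²λ + 2γR_ε + 2i·ω̄`. -/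
def D₂ (α γ ε lam η k : ℝ) : ℂ :=
  (ε ^ 2 * lam + 2 * γ * Rε ε η k : ℝ) + 2 * Complex.I * (ωbar α ε η k : ℝ)

/-- `D̃₊ = −γR_ε + (γε/2)·R′(k)·η`. -/
def Dplus (γ ε η k : ℝ) : ℝ := -γ * Rε ε η k + γ * ε / 2 * R' k * η

/-- `D̃₋ = −γR_ε − (γε/2)·R′(k)·η`. -/
def Dminus (γ ε η k : ℝ) : ℝ := -γ * Rε ε η k - γ * ε / 2 * R' k * η

/-- The 4×4 matrix `D̃_ε(λ,η,k)`. -/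
def Dmat (α γ ε lam η k : ℝ) : Matrix (Fin 4) (Fin 4) ℂ :=
  !![D₁ α γ ε lam η k, (Dplus γ ε η k : ℂ), (Dminus γ ε η k : ℂ), 0;
     (Dplus γ ε η k : ℂ), D₂ α γ ε lam η k, 0, (Dminus γ ε η k : ℂ);
     (Dminus γ ε η k : ℂ), 0, (starRingEnd ℂ) (D₂ α γ ε lam η k), (Dplus γ ε η k : ℂ);
     0, (Dminus γ ε η k : ℂ), (Dplus γ ε η k : ℂ), (starRingEnd ℂ) (D₁ α γ ε lam η k)]

/-- `δ̃_ε(λ,η,k) = det D̃_ε(λ,η,k)`. -/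
def δdet (α γ ε lam η k : ℝ) : ℂ := (Dmat α γ ε lam η k).det

/-- Adjugate entry `d̃₁ = |D̃₂|²·D̃₁* − (D̃₊² + D̃₋²)·Re D̃₂ − i(D̃₊² − D̃₋²)·Im D̃₂`. -/
def ad₁ (α γ ε lam η k : ℝ) : ℂ :=
  (Complex.normSq (D₂ α γ ε lam η k) : ℂ) * (starRingEnd ℂ) (D₁ α γ ε lam η k)
    - (((Dplus γ ε η k ^ 2 + Dminus γ ε η k ^ 2) * (D₂ α γ ε lam η k).re : ℝ) : ℂ)
    - Complex.I * (((Dplus γ ε η k ^ 2 - Dminus γ ε η k ^ 2) * (D₂ α γ ε lam η k).im : ℝ) : ℂ)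

/-- Adjugate entry `d̃₂ = |D̃₁|²·D̃₂* − (D̃₊² + D̃₋²)·Re D̃₁ − i(D̃₊² − D̃₋²)·Im D̃₁`. -/
def ad₂ (α γ ε lam η k : ℝ) : ℂ :=
  (Complex.normSq (D₁ α γ ε lam η k) : ℂ) * (starRingEnd ℂ) (D₂ α γ ε lam η k)
    - (((Dplus γ ε η k ^ 2 + Dminus γ ε η k ^ 2) * (D₁ α γ ε lam η k).re : ℝ) : ℂ)
    - Complex.I * (((Dplus γ ε η k ^ 2 - Dminus γ ε η k ^ 2) * (D₁ α γ ε lam η k).im : ℝ) : ℂ)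

/-- Adjugate entry `d̃₋ = D̃₊·(D̃₊² − D̃₋²) − D̃₊·(D̃₁·D̃₂)*`. -/
def adMinus (α γ ε lam η k : ℝ) : ℂ :=
  (Dplus γ ε η k : ℂ) * ((Dplus γ ε η k : ℂ) ^ 2 - (Dminus γ ε η k : ℂ) ^ 2)
    - (Dplus γ ε η k : ℂ) * (starRingEnd ℂ) (D₁ α γ ε lam η k * D₂ α γ ε lam η k)

/-- Adjugate entry `d̃₊ = −D̃₋·(D̃₁·D̃₂* + D̃₊² − D̃₋²)`. -/
def adPlus (α γ ε lam η k : ℝ) : ℂ :=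
  -(Dminus γ ε η k : ℂ) *
    (D₁ α γ ε lam η k * (starRingEnd ℂ) (D₂ α γ ε lam η k)
      + (Dplus γ ε η k : ℂ) ^ 2 - (Dminus γ ε η k : ℂ) ^ 2)

/-- Adjugate entry `d̃ₒ = 2·D̃₊·D̃₋·Re D̃₂`. -/
def adO (α γ ε lam η k : ℝ) : ℂ :=
  2 * (Dplus γ ε η k : ℂ) * (Dminus γ ε η k : ℂ) * ((D₂ α γ ε lam η k).re : ℂ)

/-- `Δ̃₁ = d̃₁ + d̃ₒ − d̃₋ − d̃₊*`. -/
def Δ₁ (α γ ε lam η k : ℝ) : ℂ :=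
  ad₁ α γ ε lam η k + adO α γ ε lam η k - adMinus α γ ε lam η k
    - (starRingEnd ℂ) (adPlus α γ ε lam η k)

attribute [local fun_prop] Complex.continuous_re Complex.continuous_im Complex.continuous_normSq Complex.continuous_conj Complex.continuous_ofReal

set_option maxHeartbeats 1000000 in
lemma contD1 (α γ lam η k : ℝ) : Continuous fun ε : ℝ => D₁ α γ ε lam η k := by
  simp only [D₁, Rε, Δω, ω, R, R'']; fun_prop

set_option maxHeartbeats 1000000 in
lemma contD2 (α γ lam η k : ℝ) : Continuous fun ε : ℝ => D₂ α γ ε lam η k := by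
  simp only [D₂, Rε, ωbar, ω, R, R'']; fun_prop

set_option maxHeartbeats 1000000 in
lemma contDp (γ η k : ℝ) : Continuous fun ε : ℝ => ((Dplus γ ε η k : ℝ) : ℂ) := by
  simp only [Dplus, Rε, R, R', R'']; fun_prop

set_option maxHeartbeats 1000000 in
lemma contDm (γ η k : ℝ) : Continuous fun ε : ℝ => ((Dminus γ ε η k : ℝ) : ℂ) := by
  simp only [Dminus, Rε, R, R', R'']; fun_prop

set_option maxHeartbeats 1000000 in
lemma contRε (η k : ℝ) : Continuous fun ε : ℝ => Rε ε η k := by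
  simp only [Rε, R, R'']; fun_prop

set_option maxHeartbeats 1000000 in
lemma contωbar (α η k : ℝ) : Continuous fun ε : ℝ => ωbar α ε η k := by
  simp only [ωbar, ω]; fun_prop

set_option maxHeartbeats 1000000 in
lemma contΔω (α η k : ℝ) : Continuous fun ε : ℝ => Δω α ε η k := by
  simp only [Δω, ω]; fun_prop

set_option maxHeartbeats 1000000 in
lemma contDpR (γ η k : ℝ) : Continuous fun ε : ℝ => Dplus γ ε η k := by
  simp only [Dplus, Rε, R, R', R'']; fun_prop

set_option maxHeartbeats 1000000 in
lemma contDmR (γ η k : ℝ) : Continuous fun ε : ℝ => Dminus γ ε η k := by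
  simp only [Dminus, Rε, R, R', R'']; fun_prop

set_option maxHeartbeats 1000000 in
lemma contNum (α γ lam η k : ℝ) : Continuous fun ε : ℝ => Δ₁ α γ ε lam η k := by
  simp only [Δ₁, ad₁, adO, adMinus, adPlus]
  have hr := contRε η k
  have hwb := contωbar α η k
  have hdw := contΔω α η k
  have hpR := contDpR γ η k
  have hmR := contDmR γ η k
  have h1 := contD1 α γ lam η k
  have h2 := contD2 α γ lam η k
  have hp := contDp γ η k
  have hm := contDm γ η k
  fun_prop

set_option maxHeartbeats 1000000 in
lemma contDen (α γ lam η k : ℝ) : Continuous fun ε : ℝ => δdet α γ ε lam η k := by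
  unfold δdet
  apply Continuous.matrix_det
  apply continuous_matrix
  intro i j
  have h1 := contD1 α γ lam η k
  have h2 := contD2 α γ lam η k
  have hp := contDp γ η k
  have hm := contDm γ η k
  fin_cases i <;> fin_cases j <;>
    first
      | exact continuous_const
      | exact h1 | exact h2 | exact hp | exact hm
      | exact Complex.continuous_conj.comp h1
      | exact Complex.continuous_conj.comp h2

set_option maxHeartbeats 1000000 in
lemma det4' (b w : ℝ) :
    (!![((2*b : ℝ):ℂ), ((-b:ℝ):ℂ), ((-b:ℝ):ℂ), 0;
        ((-b:ℝ):ℂ), ((2*b:ℝ):ℂ) + 2*Complex.I*(w:ℂ), 0, ((-b:ℝ):ℂ);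
        ((-b:ℝ):ℂ), 0, (starRingEnd ℂ) (((2*b:ℝ):ℂ) + 2*Complex.I*(w:ℂ)), ((-b:ℝ):ℂ);
        0, ((-b:ℝ):ℂ), ((-b:ℝ):ℂ), (starRingEnd ℂ) ((2*b:ℝ):ℂ)]).det
      = ((16*b^2*w^2 : ℝ):ℂ) := by
  simp [Matrix.det_succ_row_zero, Fin.sum_univ_succ,
    show ((1:Fin 4).succAbove (2:Fin 3)) = 3 by decide,
    show ((2:Fin 4).succAbove (2:Fin 3)) = 3 by decide]
  simp [Complex.ext_iff, Complex.conj_ofReal, pow_two]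
  constructor <;> ring

set_option maxHeartbeats 1000000 in
lemma num_zero (α γ lam η k : ℝ) :
    ((γ * R k : ℝ) : ℂ) * Δ₁ α γ 0 lam η k
      = ((8 * (γ * R k)^2 * (ω α k)^2 : ℝ) : ℂ) := by
  simp only [Δ₁, ad₁, adO, adMinus, adPlus, D₁, D₂, Dplus, Dminus, Rε, Δω, ωbar]
  simp only [mul_zero, zero_mul, ne_eq, OfNat.ofNat_ne_zero, not_false_eq_true, zero_pow,
    zero_div, add_zero, sub_zero, sub_self, Complex.ofReal_zero, zero_add]
  simp [Complex.ext_iff, Complex.conj_ofReal, Complex.normSq_apply, pow_two]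
  ring

set_option maxHeartbeats 1000000 in
lemma den_zero (α γ lam η k : ℝ) :
    δdet α γ 0 lam η k = ((16 * (γ * R k)^2 * (ω α k)^2 : ℝ) : ℂ) := by
  simp only [δdet, Dmat, D₁, D₂, Dplus, Dminus, Rε, Δω, ωbar]
  simp only [mul_zero, zero_mul, ne_eq, OfNat.ofNat_ne_zero, not_false_eq_true, zero_pow,
    zero_div, add_zero, sub_zero, sub_self, Complex.ofReal_zero, zero_add]
  rw [show ((ω α k + ω α k)/2 : ℝ) = ω α k by ring, mul_assoc 2 γ (R k), neg_mul γ (R k)]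
  exact det4' (γ * R k) (ω α k)

theorem Delta1_limit (α γ : ℝ) (hα : 0 < α) (hγ : 0 < γ)
    (lam η k : ℝ) (hlam : 0 < lam)
    (hk : k ∈ Set.Icc (-(1/2) : ℝ) (1/2)) (hk0 : k ≠ 0) :
    Filter.Tendsto
      (fun ε : ℝ => ((γ * R k : ℝ) : ℂ) * Δ₁ α γ ε lam η k / δdet α γ ε lam η k)
      (nhdsWithin 0 (Set.Ioi 0)) (nhds (1/2)) := by
  obtain ⟨hk1, hk2⟩ := hk
  have hs : Real.sin (π * k) ≠ 0 := by
    intro h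
    rw [Real.sin_eq_zero_iff_of_lt_of_lt (by nlinarith [Real.pi_pos])
      (by nlinarith [Real.pi_pos])] at h
    exact hk0 (by have := Real.pi_pos; nlinarith)
  have hR : 0 < R k := by
    rw [R]
    have h1 : 0 < Real.sin (π * k) ^ 2 := pow_two_pos_of_ne_zero hs
    nlinarith [sq_nonneg (Real.cos (π * k))]
  have hw : 0 < ω α k := by
    rw [ω]
    have h1 : 0 < Real.sin (π * k) ^ 2 := pow_two_pos_of_ne_zero hs
    have h2 : 0 < Real.sqrt α := Real.sqrt_pos.mpr hα
    positivity
  have hb : 0 < γ * R k := mul_pos hγ hR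
  have h16 : ((16 * (γ * R k)^2 * (ω α k)^2 : ℝ) : ℂ) ≠ 0 := by
    have : (0:ℝ) < 16 * (γ * R k)^2 * (ω α k)^2 := by positivity
    exact_mod_cast ne_of_gt this
  have hden0 : δdet α γ 0 lam η k ≠ 0 := by rw [den_zero]; exact h16
  have hc : ContinuousAt
      (fun ε : ℝ => ((γ * R k : ℝ) : ℂ) * Δ₁ α γ ε lam η k / δdet α γ ε lam η k) 0 := by
    exact ContinuousAt.div
      ((continuous_const.mul (contNum α γ lam η k)).continuousAt)
      ((contDen α γ lam η k).continuousAt) hden0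
  have h12 : ((γ * R k : ℝ) : ℂ) * Δ₁ α γ 0 lam η k / δdet α γ 0 lam η k = 1/2 := by
    rw [num_zero, den_zero, div_eq_div_iff h16 (by norm_num)]
    push_cast
    ring
  have ht : Filter.Tendsto
      (fun ε : ℝ => ((γ * R k : ℝ) : ℂ) * Δ₁ α γ ε lam η k / δdet α γ ε lam η k)
      (nhds 0) (nhds (((γ * R k : ℝ) : ℂ) * Δ₁ α γ 0 lam η k / δdet α γ 0 lam η k)) :=
    hc.tendsto
  rw [h12] at ht
  exact ht.mono_left nhdsWithin_le_nhds
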